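/- Let n ∈ ℕ, 0 < r < R and let w : ℝ² → ℝⁿ be continuously differentiable. Then the circle averages A_w(ρ) := (1/2π)∫₀^{2π} w(ρ cos θ, ρ sin θ) dθ satisfy |A_w(R) − A_w(r)| ≤ (2π)^{−1/2} (log(R/r))^{1/2} ( ∫_{𝔻_R∖𝔻_r} |Dw(x)|² dx )^{1/2}. -/

import Mathlib

open MeasureTheory Real

noncomputable section

abbrev E2 := EuclideanSpace ℝ (Fin 2)

/-- Square of the Hilbert–Schmidt (Frobenius) norm of the total derivative:
`|Dw(x)|² = Σᵢ |∂ᵢ w(x)|²`. -/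
def hsNormSq {n : ℕ} (w : E2 → EuclideanSpace ℝ (Fin n)) (x : E2) : ℝ :=
  ∑ i : Fin 2, ‖fderiv ℝ w x (EuclideanSpace.single i 1)‖ ^ 2

/-- The circle average `A_w(ρ) = (2π)⁻¹ ∫₀^{2π} w(ρ cos θ, ρ sin θ) dθ`. -/
def circAvg {n : ℕ} (w : E2 → EuclideanSpace ℝ (Fin n)) (ρ : ℝ) : EuclideanSpace ℝ (Fin n) :=
  (2 * π)⁻¹ • ∫ θ in (0 : ℝ)..(2 * π),
    w ((WithLp.equiv 2 (Fin 2 → ℝ)).symm ![ρ * Real.cos θ, ρ * Real.sin θ])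

namespace Stmt9Aux

open Set

/-- The point `(ρ cos θ, ρ sin θ)` in `E2`. -/
def cpt (ρ θ : ℝ) : E2 := (WithLp.equiv 2 (Fin 2 → ℝ)).symm ![ρ * Real.cos θ, ρ * Real.sin θ]

lemma cpt_eq_smul (ρ θ : ℝ) : cpt ρ θ = ρ • cpt 1 θ := by
  simp only [cpt]; ext i; fin_cases i <;> simp

lemma continuous_cpt : Continuous fun p : ℝ × ℝ => cpt p.1 p.2 := by
  apply (EuclideanSpace.equiv (Fin 2) ℝ).symm.continuous.comp
  refine continuous_pi fun i => ?_
  fin_cases i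
  · exact continuous_fst.mul (Real.continuous_cos.comp continuous_snd)
  · exact continuous_fst.mul (Real.continuous_sin.comp continuous_snd)

lemma norm_cpt (ρ θ : ℝ) : ‖cpt ρ θ‖ = |ρ| := by
  rw [EuclideanSpace.norm_eq, ← Real.sqrt_sq_eq_abs]
  congr 1
  rw [Fin.sum_univ_two]
  show ‖ρ * Real.cos θ‖^2 + ‖ρ * Real.sin θ‖^2 = ρ^2
  simp only [norm_mul, Real.norm_eq_abs]
  nlinarith [sin_sq_add_cos_sq θ, sq_abs ρ, sq_abs (Real.cos θ), sq_abs (Real.sin θ)]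

lemma cpt_periodic (ρ : ℝ) : Function.Periodic (fun θ => cpt ρ θ) (2*π) := by
  intro θ; simp [cpt]

lemma cpt_one (θ : ℝ) :
    cpt 1 θ = Real.cos θ • EuclideanSpace.single (0 : Fin 2) (1:ℝ)
      + Real.sin θ • EuclideanSpace.single (1 : Fin 2) (1:ℝ) := by
  ext i; fin_cases i <;> simp [cpt]

lemma hsNormSq_nonneg {n : ℕ} {w : E2 → EuclideanSpace ℝ (Fin n)} (x : E2) :
    0 ≤ hsNormSq w x :=
  Finset.sum_nonneg fun _ _ => sq_nonneg _

/-- The identification of `ℝ × ℝ` with `E2`. -/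
def eqv : (ℝ × ℝ) ≃ᵐ E2 :=
  (MeasurableEquiv.finTwoArrow (α := ℝ)).symm.trans (MeasurableEquiv.toLp 2 (Fin 2 → ℝ))

lemma eqv_mp : MeasurePreserving eqv :=
  ((MeasureTheory.volume_preserving_finTwoArrow ℝ).symm _).trans
    ((EuclideanSpace.volume_preserving_symm_measurableEquiv_toLp (Fin 2)).symm)

lemma eqv_polar (p : ℝ × ℝ) : eqv (polarCoord.symm p) = cpt p.1 p.2 := rfl

lemma integrableOn_of_cont {F : ℝ × ℝ → ℝ} (hF : Continuous F) {a b c d : ℝ}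
    {S : Set (ℝ × ℝ)} (hS : S ⊆ Icc a b ×ˢ Icc c d) :
    IntegrableOn F S (volume.prod volume) := by
  rw [← Measure.volume_eq_prod]
  exact (hF.locallyIntegrable.integrableOn_isCompact
    (isCompact_Icc.prod isCompact_Icc)).mono_set hS

/-- Polar change of variables for the annulus. -/
lemma polar_annulus (h : E2 → ℝ) {r R : ℝ} (hr : 0 < r) :
    ∫ p in Ico r R ×ˢ Ioo (-π) π, p.1 * h (cpt p.1 p.2)
      = ∫ x in Metric.ball (0:E2) R \ Metric.ball 0 r, h x := by
  set A : Set E2 := Metric.ball (0:E2) R \ Metric.ball 0 r with hA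
  set A' : Set (ℝ × ℝ) := eqv ⁻¹' A with hA'
  have hAm : MeasurableSet A := measurableSet_ball.diff measurableSet_ball
  have hA'm : MeasurableSet A' := eqv.measurable hAm
  have hσ : Continuous (⇑polarCoord.symm : ℝ × ℝ → ℝ × ℝ) := by
    have : (⇑polarCoord.symm : ℝ × ℝ → ℝ × ℝ)
        = fun p => (p.1 * Real.cos p.2, p.1 * Real.sin p.2) := by
      funext p; exact polarCoord_symm_apply p
    rw [this]; fun_prop
  have hσA : MeasurableSet (polarCoord.symm ⁻¹' A') := hA'm.preimage hσ.measurable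
  have key := integral_comp_polarCoord_symm (A'.indicator fun q => h (eqv q))
  have hRHS : ∫ q, A'.indicator (fun q => h (eqv q)) q = ∫ x in A, h x := by
    rw [integral_indicator hA'm]
    exact eqv_mp.setIntegral_preimage_emb eqv.measurableEmbedding _ _
  have hptw : ∀ p, p.1 • (A'.indicator fun q => h (eqv q)) (polarCoord.symm p)
      = (polarCoord.symm ⁻¹' A').indicator (fun p => p.1 * h (cpt p.1 p.2)) p := by
    intro p
    by_cases hp : polarCoord.symm p ∈ A'
    · rw [Set.indicator_of_mem hp, Set.indicator_of_mem (by exact hp), smul_eq_mul, eqv_polar]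
    · rw [Set.indicator_of_notMem hp, Set.indicator_of_notMem (by exact hp), smul_zero]
  have hset : polarCoord.target ∩ polarCoord.symm ⁻¹' A' = Ico r R ×ˢ Ioo (-π) π := by
    ext p
    have hmem : polarCoord.symm p ∈ A' ↔ (‖cpt p.1 p.2‖ < R ∧ ¬ ‖cpt p.1 p.2‖ < r) := by
      rw [hA', Set.mem_preimage, eqv_polar p, hA, Set.mem_diff, mem_ball_zero_iff,
        mem_ball_zero_iff]
    constructor
    · rintro ⟨htar, hmem'⟩
      rw [polarCoord_target] at htar
      obtain ⟨h1, h2⟩ := htar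
      have hm2 := hmem.mp (Set.mem_preimage.mp hmem')
      rw [norm_cpt, abs_of_pos (mem_Ioi.mp h1)] at hm2
      exact ⟨⟨not_lt.mp hm2.2, hm2.1⟩, h2⟩
    · rintro ⟨⟨hge, hlt⟩, h2⟩
      have hpos : 0 < p.1 := lt_of_lt_of_le hr hge
      refine ⟨by rw [polarCoord_target]; exact ⟨mem_Ioi.mpr hpos, h2⟩, ?_⟩
      refine Set.mem_preimage.mpr (hmem.mpr ?_)
      rw [norm_cpt, abs_of_pos hpos]
      exact ⟨hlt, not_lt.mpr hge⟩
  calc ∫ p in Ico r R ×ˢ Ioo (-π) π, p.1 * h (cpt p.1 p.2)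
      = ∫ p in polarCoord.target ∩ polarCoord.symm ⁻¹' A',
          p.1 * h (cpt p.1 p.2) := by rw [hset]
    _ = ∫ p in polarCoord.target,
          (polarCoord.symm ⁻¹' A').indicator (fun p => p.1 * h (cpt p.1 p.2)) p := by
        rw [setIntegral_indicator hσA]
    _ = ∫ p in polarCoord.target,
          p.1 • (A'.indicator fun q => h (eqv q)) (polarCoord.symm p) :=
        setIntegral_congr_fun polarCoord.open_target.measurableSet
          fun p _ => (hptw p).symm
    _ = ∫ x in A, h x := by rw [key, hRHS]

/-- The integral over the product set `(0, 2π] × (r, R]` of `h(cpt ρ θ) ρ` equals the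
annulus integral. -/
lemma step5 (h : E2 → ℝ) (hh : Continuous h) {r R : ℝ} (hr : 0 < r) (hrR : r < R) :
    ∫ z in Ioc 0 (2*π) ×ˢ Ioc r R, h (cpt z.2 z.1) * z.2 ∂(volume.prod volume)
      = ∫ x in Metric.ball (0:E2) R \ Metric.ball 0 r, h x := by
  have hpi : -π ≤ π := by linarith [pi_pos]
  have hG : Continuous fun p : ℝ × ℝ => p.1 * h (cpt p.1 p.2) :=
    continuous_fst.mul (hh.comp continuous_cpt)
  have hG' : Continuous fun z : ℝ × ℝ => h (cpt z.2 z.1) * z.2 :=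
    (hh.comp (continuous_cpt.comp continuous_swap)).mul continuous_snd
  rw [← polar_annulus h hr, Measure.volume_eq_prod]
  rw [setIntegral_prod _
      (integrableOn_of_cont hG' (prod_mono Ioc_subset_Icc_self Ioc_subset_Icc_self)),
    setIntegral_prod _
      (integrableOn_of_cont hG (prod_mono Ico_subset_Icc_self Ioo_subset_Icc_self))]
  rw [integral_integral_swap (f := fun θ ρ => h (cpt ρ θ) * ρ)
    (by
      rw [Measure.prod_restrict]
      exact integrableOn_of_cont hG' (prod_mono Ioc_subset_Icc_self Ioc_subset_Icc_self))]
  rw [Measure.restrict_congr_set Ico_ae_eq_Ioc]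
  refine integral_congr_ae (Filter.Eventually.of_forall fun ρ => ?_)
  rw [Measure.restrict_congr_set Ioo_ae_eq_Ioc]
  have hper : Function.Periodic (fun θ => ρ * h (cpt ρ θ)) (2*π) := by
    intro θ
    have := cpt_periodic ρ θ
    simp only at this
    simp only [this]
  show (∫ θ in Ioc 0 (2*π), h (cpt ρ θ) * ρ) = ∫ θ in Ioc (-π) π, ρ * h (cpt ρ θ)
  calc ∫ θ in Ioc 0 (2*π), h (cpt ρ θ) * ρ
      = ∫ θ in (0:ℝ)..(2*π), ρ * h (cpt ρ θ) := by
        rw [← intervalIntegral.integral_of_le (by positivity : (0:ℝ) ≤ 2*π)]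
        simp_rw [mul_comm]
    _ = ∫ θ in (-π)..π, ρ * h (cpt ρ θ) := by
        have h1 := hper.intervalIntegral_add_eq (-π) 0
        rw [show -π + 2*π = π by ring, zero_add] at h1
        exact h1.symm
    _ = ∫ θ in Ioc (-π) π, ρ * h (cpt ρ θ) := intervalIntegral.integral_of_le hpi

lemma step4 {r R : ℝ} (hr : 0 < r) (hrR : r < R) :
    ∫ z in Ioc 0 (2*π) ×ˢ Ioc r R, z.2⁻¹ ∂(volume.prod volume) = (2*π) * Real.log (R/r) := by
  calc ∫ z in Ioc 0 (2*π) ×ˢ Ioc r R, z.2⁻¹ ∂(volume.prod volume)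
      = ∫ z in Ioc 0 (2*π) ×ˢ Ioc r R, (fun _ : ℝ => (1:ℝ)) z.1 * (fun ρ : ℝ => ρ⁻¹) z.2
          ∂(volume.prod volume) := by simp
    _ = (∫ _ in Ioc 0 (2*π), (1:ℝ)) * ∫ ρ in Ioc r R, ρ⁻¹ :=
        setIntegral_prod_mul (fun _ : ℝ => (1:ℝ)) (fun ρ : ℝ => ρ⁻¹) _ _
    _ = (2*π) * Real.log (R/r) := by
        rw [setIntegral_const, ← intervalIntegral.integral_of_le hrR.le,
          integral_inv_of_pos hr (hr.trans hrR)]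
        simp [Real.volume_Ioc]
        left
        linarith [pi_pos]

section W

variable {n : ℕ} {w : E2 → EuclideanSpace ℝ (Fin n)} (hw : ContDiff ℝ 1 w)

include hw

lemma continuous_hs : Continuous fun x => Real.sqrt (hsNormSq w x) := by
  apply Real.continuous_sqrt.comp
  unfold hsNormSq
  exact continuous_finset_sum _ fun i _ =>
    (((hw.continuous_fderiv one_ne_zero).clm_apply continuous_const).norm.pow 2)

lemma continuous_hsNormSq : Continuous fun x => hsNormSq w x := by
  unfold hsNormSq
  exact continuous_finset_sum _ fun i _ =>
    (((hw.continuous_fderiv one_ne_zero).clm_apply continuous_const).norm.pow 2)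

lemma fderiv_bound (x : E2) (θ : ℝ) :
    ‖fderiv ℝ w x (cpt 1 θ)‖ ≤ Real.sqrt (hsNormSq w x) := by
  rw [cpt_one, map_add, (fderiv ℝ w x).map_smul, (fderiv ℝ w x).map_smul]
  set a := ‖fderiv ℝ w x (EuclideanSpace.single (0:Fin 2) (1:ℝ))‖ with ha
  set b := ‖fderiv ℝ w x (EuclideanSpace.single (1:Fin 2) (1:ℝ))‖ with hb
  have h1 : ‖Real.cos θ • fderiv ℝ w x (EuclideanSpace.single (0:Fin 2) (1:ℝ))
      + Real.sin θ • fderiv ℝ w x (EuclideanSpace.single (1:Fin 2) (1:ℝ))‖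
      ≤ |Real.cos θ| * a + |Real.sin θ| * b := by
    refine (norm_add_le _ _).trans ?_
    simp [norm_smul, ha, hb]
  refine h1.trans ?_
  have hhs : hsNormSq w x = a^2 + b^2 := by simp [hsNormSq, Fin.sum_univ_two, ha, hb]
  have ha0 : 0 ≤ a := norm_nonneg _
  have hb0 : 0 ≤ b := norm_nonneg _
  rw [hhs, Real.le_sqrt (by positivity) (by positivity)]
  nlinarith [sq_abs (Real.cos θ), sq_abs (Real.sin θ), abs_nonneg (Real.cos θ),
    abs_nonneg (Real.sin θ), sin_sq_add_cos_sq θ,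
    sq_nonneg (|Real.cos θ| * b - |Real.sin θ| * a)]

lemma hasDerivAt_cpt (θ ρ : ℝ) :
    HasDerivAt (fun ρ => w (cpt ρ θ)) (fderiv ℝ w (cpt ρ θ) (cpt 1 θ)) ρ := by
  have h1 : HasDerivAt (fun ρ : ℝ => cpt ρ θ) (cpt 1 θ) ρ := by
    have : HasDerivAt (fun ρ : ℝ => ρ • cpt 1 θ) ((1:ℝ) • cpt 1 θ) ρ :=
      (hasDerivAt_id ρ).smul_const (cpt 1 θ)
    simp only [one_smul] at this
    exact (funext fun ρ => (cpt_eq_smul ρ θ)) ▸ this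
  exact ((hw.differentiable one_ne_zero (cpt ρ θ)).hasFDerivAt).comp_hasDerivAt ρ h1

lemma w_diff (r R θ : ℝ) :
    w (cpt R θ) - w (cpt r θ) = ∫ ρ in r..R, fderiv ℝ w (cpt ρ θ) (cpt 1 θ) := by
  refine (intervalIntegral.integral_eq_sub_of_hasDerivAt
    (fun ρ _ => hasDerivAt_cpt hw θ ρ) ?_).symm
  apply Continuous.intervalIntegrable
  exact ((hw.continuous_fderiv one_ne_zero).comp
    (continuous_cpt.comp (continuous_id.prodMk continuous_const))).clm_apply continuous_const

lemma continuous_D (θ : ℝ) : Continuous fun ρ => fderiv ℝ w (cpt ρ θ) (cpt 1 θ) :=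
  ((hw.continuous_fderiv one_ne_zero).comp
    (continuous_cpt.comp (continuous_id.prodMk continuous_const))).clm_apply continuous_const

lemma step1 (r R : ℝ) (hr : 0 < r) (hrR : r < R) :
    ‖circAvg w R - circAvg w r‖ ≤
      (2*π)⁻¹ * ∫ θ in (0:ℝ)..(2*π), ∫ ρ in r..R, Real.sqrt (hsNormSq w (cpt ρ θ)) := by
  have hwc : Continuous w := hw.continuous
  have h2pi : (0:ℝ) ≤ 2*π := by positivity
  have hint : ∀ ρ : ℝ, IntervalIntegrable (fun θ => w (cpt ρ θ)) volume 0 (2*π) :=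
    fun ρ => (hwc.comp
      (continuous_cpt.comp (continuous_const.prodMk continuous_id))).intervalIntegrable _ _
  have hdiff : circAvg w R - circAvg w r
      = (2*π)⁻¹ • ∫ θ in (0:ℝ)..(2*π), (w (cpt R θ) - w (cpt r θ)) := by
    rw [show circAvg w R = (2*π)⁻¹ • ∫ θ in (0:ℝ)..(2*π), w (cpt R θ) from rfl,
      show circAvg w r = (2*π)⁻¹ • ∫ θ in (0:ℝ)..(2*π), w (cpt r θ) from rfl, ← smul_sub,
      ← intervalIntegral.integral_sub (hint R) (hint r)]
  rw [hdiff, norm_smul, norm_inv, Real.norm_eq_abs, abs_of_nonneg h2pi]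
  gcongr
  calc ‖∫ θ in (0:ℝ)..(2*π), (w (cpt R θ) - w (cpt r θ))‖
      ≤ ∫ θ in (0:ℝ)..(2*π), ‖w (cpt R θ) - w (cpt r θ)‖ :=
        intervalIntegral.norm_integral_le_integral_norm h2pi
    _ ≤ ∫ θ in (0:ℝ)..(2*π), ∫ ρ in r..R, Real.sqrt (hsNormSq w (cpt ρ θ)) := by
        refine intervalIntegral.integral_mono_on h2pi ?_ ?_ fun θ _ => ?_
        · exact (((hint R).sub (hint r)).norm)
        · apply Continuous.intervalIntegrable
          exact intervalIntegral.continuous_parametric_intervalIntegral_of_continuous'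
            (f := fun θ ρ => Real.sqrt (hsNormSq w (cpt ρ θ))) (μ := volume)
            ((continuous_hs hw).comp (continuous_cpt.comp continuous_swap)) r R
        · rw [w_diff hw r R θ]
          calc ‖∫ ρ in r..R, fderiv ℝ w (cpt ρ θ) (cpt 1 θ)‖
              ≤ ∫ ρ in r..R, ‖fderiv ℝ w (cpt ρ θ) (cpt 1 θ)‖ :=
                intervalIntegral.norm_integral_le_integral_norm hrR.le
            _ ≤ ∫ ρ in r..R, Real.sqrt (hsNormSq w (cpt ρ θ)) := by
                refine intervalIntegral.integral_mono_on hrR.le ?_ ?_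
                  fun ρ _ => fderiv_bound hw _ θ
                · exact ((continuous_D hw θ).norm).intervalIntegrable _ _
                · exact ((continuous_hs hw).comp
                    (continuous_cpt.comp
                      (continuous_id.prodMk continuous_const))).intervalIntegrable _ _

lemma step2 (r R : ℝ) (hrR : r < R) :
    ∫ θ in (0:ℝ)..(2*π), ∫ ρ in r..R, Real.sqrt (hsNormSq w (cpt ρ θ))
      = ∫ z in Ioc 0 (2*π) ×ˢ Ioc r R, Real.sqrt (hsNormSq w (cpt z.2 z.1))
          ∂(volume.prod volume) := by
  have h2pi : (0:ℝ) ≤ 2*π := by positivity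
  have hcont : Continuous fun z : ℝ × ℝ => Real.sqrt (hsNormSq w (cpt z.2 z.1)) :=
    (continuous_hs hw).comp (continuous_cpt.comp continuous_swap)
  rw [intervalIntegral.integral_of_le h2pi]
  simp_rw [intervalIntegral.integral_of_le hrR.le]
  rw [← setIntegral_prod _
    (integrableOn_of_cont hcont (prod_mono Ioc_subset_Icc_self Ioc_subset_Icc_self))]

lemma step3 {r R : ℝ} (hr : 0 < r) (hrR : r < R) :
    ∫ z in Ioc 0 (2*π) ×ˢ Ioc r R, Real.sqrt (hsNormSq w (cpt z.2 z.1)) ∂(volume.prod volume)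
      ≤ Real.sqrt (∫ z in Ioc 0 (2*π) ×ˢ Ioc r R, hsNormSq w (cpt z.2 z.1) * z.2
            ∂(volume.prod volume))
        * Real.sqrt (∫ z in Ioc 0 (2*π) ×ˢ Ioc r R, z.2⁻¹ ∂(volume.prod volume)) := by
  set S : Set (ℝ × ℝ) := Ioc 0 (2*π) ×ˢ Ioc r R with hS
  have hSm : MeasurableSet S := measurableSet_Ioc.prod measurableSet_Ioc
  have hSsub : S ⊆ Icc 0 (2*π) ×ˢ Icc r R := prod_mono Ioc_subset_Icc_self Ioc_subset_Icc_self
  set μS := (volume.prod volume).restrict S with hμS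
  set f : ℝ × ℝ → ℝ := fun z => Real.sqrt (hsNormSq w (cpt z.2 z.1)) * Real.sqrt z.2 with hf
  set g : ℝ × ℝ → ℝ := fun z => (Real.sqrt z.2)⁻¹ with hg
  have hcont_f : Continuous f :=
    ((continuous_hs hw).comp (continuous_cpt.comp continuous_swap)).mul
      (Real.continuous_sqrt.comp continuous_snd)
  have hae : ∀ᵐ z ∂μS, Real.sqrt (hsNormSq w (cpt z.2 z.1)) = f z * g z := by
    filter_upwards [ae_restrict_mem hSm] with z hz
    have hz2 : 0 < z.2 := hr.trans_le hz.2.1.le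
    rw [hf, hg]
    field_simp
  have hconj : Real.HolderConjugate 2 2 := Real.HolderConjugate.two_two
  have hfm : MemLp f (ENNReal.ofReal 2) μS := by
    rw [show ENNReal.ofReal 2 = 2 by norm_num]
    rw [memLp_two_iff_integrable_sq hcont_f.aestronglyMeasurable.restrict]
    exact integrableOn_of_cont (hcont_f.pow 2) hSsub
  have hgmeas : Measurable g := (Real.continuous_sqrt.measurable.comp measurable_snd).inv
  have hSfin : (volume.prod volume) S < ⊤ := by
    rw [hS, Measure.prod_prod]
    exact ENNReal.mul_lt_top measure_Ioc_lt_top measure_Ioc_lt_top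
  have hg_sq_int : Integrable (fun z => g z ^ 2) μS := by
    refine Integrable.mono' (g := fun _ => r⁻¹) (integrableOn_const hSfin.ne) ?_ ?_
    · exact ((hgmeas.pow_const 2).aestronglyMeasurable).restrict
    · filter_upwards [ae_restrict_mem hSm] with z hz
      have hz2 : r ≤ z.2 := hz.2.1.le
      have h0 : (0:ℝ) < z.2 := hr.trans_le hz2
      rw [hg]
      rw [Real.norm_eq_abs, abs_of_nonneg (by positivity)]
      show (Real.sqrt z.2)⁻¹ ^ 2 ≤ r⁻¹
      rw [← Real.sqrt_inv, Real.sq_sqrt (by positivity)]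
      exact inv_anti₀ hr hz2
  have hgm : MemLp g (ENNReal.ofReal 2) μS := by
    rw [show ENNReal.ofReal 2 = 2 by norm_num,
      memLp_two_iff_integrable_sq (hgmeas.aestronglyMeasurable).restrict]
    exact hg_sq_int
  have key := integral_mul_le_Lp_mul_Lq_of_nonneg hconj
    (Filter.Eventually.of_forall fun z => by positivity)
    (Filter.Eventually.of_forall fun z => by positivity) hfm hgm
  have hL : ∫ z in S, Real.sqrt (hsNormSq w (cpt z.2 z.1)) ∂(volume.prod volume)
      = ∫ z, f z * g z ∂μS := integral_congr_ae hae
  have hR1 : ∫ z, f z ^ (2:ℝ) ∂μS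
      = ∫ z in S, hsNormSq w (cpt z.2 z.1) * z.2 ∂(volume.prod volume) := by
    refine integral_congr_ae ?_
    filter_upwards [ae_restrict_mem hSm] with z hz
    have h0 : (0:ℝ) ≤ z.2 := (hr.trans_le hz.2.1.le).le
    rw [hf]
    show (Real.sqrt (hsNormSq w (cpt z.2 z.1)) * Real.sqrt z.2) ^ (2:ℝ) = _
    rw [Real.rpow_two, mul_pow, Real.sq_sqrt (hsNormSq_nonneg _), Real.sq_sqrt h0]
  have hR2 : ∫ z, g z ^ (2:ℝ) ∂μS = ∫ z in S, z.2⁻¹ ∂(volume.prod volume) := by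
    refine integral_congr_ae ?_
    filter_upwards [ae_restrict_mem hSm] with z hz
    have h0 : (0:ℝ) ≤ z.2 := (hr.trans_le hz.2.1.le).le
    rw [hg]
    show (Real.sqrt z.2)⁻¹ ^ (2:ℝ) = z.2⁻¹
    rw [Real.rpow_two, ← Real.sqrt_inv, Real.sq_sqrt (by positivity)]
  rw [hL]
  refine key.trans ?_
  rw [hR1, hR2, ← Real.sqrt_eq_rpow, ← Real.sqrt_eq_rpow]

end W

end Stmt9Aux

open Stmt9Aux

/-- For a `C¹` map `w : ℝ² → ℝⁿ` and `0 < r < R` the circle averages satisfy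
`|A_w(R) − A_w(r)| ≤ (2π)^{-1/2} (log(R/r))^{1/2} (∫_{𝔻_R∖𝔻_r} |Dw|² dx)^{1/2}`. -/
theorem stmt9 :
    ∀ n : ℕ, ∀ r R : ℝ, 0 < r → r < R → ∀ w : E2 → EuclideanSpace ℝ (Fin n),
      ContDiff ℝ 1 w →
      ‖circAvg w R - circAvg w r‖ ≤
        Real.sqrt ((2 * π)⁻¹) * Real.sqrt (Real.log (R / r)) *
          Real.sqrt (∫ x in Metric.ball (0 : E2) R \ Metric.ball 0 r, hsNormSq w x) := by
  intro n r R hr hrR w hw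
  have h2pi : (0:ℝ) < 2*π := by positivity
  set K := ∫ x in Metric.ball (0 : E2) R \ Metric.ball 0 r, hsNormSq w x with hK
  set L := Real.log (R / r) with hL
  have hchain : ‖circAvg w R - circAvg w r‖
      ≤ (2*π)⁻¹ * (Real.sqrt K * Real.sqrt ((2*π) * L)) := by
    refine (step1 hw r R hr hrR).trans ?_
    gcongr (2*π)⁻¹ * ?_
    rw [step2 hw r R hrR]
    refine (step3 hw hr hrR).trans ?_
    rw [step5 (fun x => hsNormSq w x) (continuous_hsNormSq hw) hr hrR, step4 hr hrR]
  refine hchain.trans (le_of_eq ?_)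
  have hL0 : 0 ≤ L := Real.log_nonneg (by rw [le_div_iff₀ hr]; linarith)
  rw [Real.sqrt_mul h2pi.le L, Real.sqrt_inv]
  have hs2 : Real.sqrt (2*π) > 0 := Real.sqrt_pos.mpr h2pi
  have hmul : Real.sqrt (2*π) * Real.sqrt (2*π) = 2*π := Real.mul_self_sqrt h2pi.le
  have h1 : (2*π)⁻¹ = (Real.sqrt (2*π))⁻¹ * (Real.sqrt (2*π))⁻¹ := by
    rw [← mul_inv, hmul]
  rw [h1]
  calc ((Real.sqrt (2*π))⁻¹ * (Real.sqrt (2*π))⁻¹)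
        * (Real.sqrt K * (Real.sqrt (2*π) * Real.sqrt L))
      = (Real.sqrt (2*π))⁻¹ * Real.sqrt L * Real.sqrt K
          * ((Real.sqrt (2*π))⁻¹ * Real.sqrt (2*π)) := by ring
    _ = (Real.sqrt (2*π))⁻¹ * Real.sqrt L * Real.sqrt K := by
        rw [inv_mul_cancel₀ hs2.ne', mul_one]
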